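/- Let I ⊆ ℝ be an open interval, let p, q : I → ℝ be smooth with p(x) > 0 for all x ∈ I, let φ : I → ℂ be smooth with compact support in I, and let N ∈ ℕ. Then there exists a constant C > 0, depending only on φ, p, q, N, such that for every ω ∈ ℝ \ {0} and every smooth solution γ : I → ℂ of −γ''(x) + q(x)γ(x) = ω²p(x)γ(x), one has |∫_I φ(x)γ(x) dx| ≤ C·|ω|^{−2N}·sup_{x ∈ supp φ} |γ(x)|. -/

import Mathlib

open Set Filter MeasureTheory Topology
local notation "∞E" => ((⊤ : ℕ∞) : WithTop ℕ∞)

/-- Integration by parts against a smooth compactly supported test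
function `φ` gives arbitrary polynomial decay in `ω` of the pairing with any
generalized eigenfunction `γ` of `−γ'' + qγ = ω²pγ` on an open interval `I`
(`p > 0`, `p`, `q` smooth): `|∫_I φγ| ≤ C|ω|^{−2N} sup_{supp φ} |γ|` with `C`
independent of `ω` and `γ`. -/
theorem eigenfunction_pairing_decay
    (I : Set ℝ) (hIo : IsOpen I) (hIc : I.OrdConnected)
    (p q : ℝ → ℝ) (hp : ContDiffOn ℝ (⊤ : ℕ∞) p I) (hq : ContDiffOn ℝ (⊤ : ℕ∞) q I)
    (hppos : ∀ x ∈ I, 0 < p x)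
    (φ : ℝ → ℂ) (hφ : ContDiff ℝ (⊤ : ℕ∞) φ) (hφsupp : HasCompactSupport φ)
    (hφI : tsupport φ ⊆ I) (N : ℕ) :
    ∃ C > 0, ∀ ω : ℝ, ω ≠ 0 → ∀ γ : ℝ → ℂ, ContDiffOn ℝ (⊤ : ℕ∞) γ I →
      (∀ x ∈ I, -deriv (deriv γ) x + (q x : ℂ) * γ x = (ω : ℂ) ^ 2 * (p x : ℂ) * γ x) →
      ‖∫ x in I, φ x * γ x‖ ≤ C * (|ω| ^ (2 * N))⁻¹ * ⨆ x : tsupport φ, ‖γ x‖ := by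
  classical
  by_cases hKemp : tsupport φ = ∅
  · refine ⟨1, one_pos, fun ω hω γ hγ heq => ?_⟩
    have hφ0 : φ = 0 := tsupport_eq_empty_iff.mp hKemp
    haveI : IsEmpty ↥(tsupport φ) := by rw [hKemp]; exact Set.isEmpty_coe_sort.mpr rfl
    simp [hφ0, Real.iSup_of_isEmpty]
  -- notation
  set K : Set ℝ := tsupport φ with hKdef
  have hKcl : IsClosed K := isClosed_tsupport φ
  have hKcpt : IsCompact K := hφsupp
  have hKne : K.Nonempty := nonempty_iff_ne_empty.mpr hKemp
  -- geometry: choose a window [m-δ, M+δ] ⊆ I around K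
  set m : ℝ := sInf K with hmdef
  set M : ℝ := sSup K with hMdef
  have hmK : m ∈ K := hKcpt.sInf_mem hKne
  have hMK : M ∈ K := hKcpt.sSup_mem hKne
  have hmI : m ∈ I := hφI hmK
  have hMI : M ∈ I := hφI hMK
  have hmM : m ≤ M := le_csSup hKcpt.bddAbove hmK
  have hKmM : K ⊆ Icc m M := fun x hx =>
    ⟨csInf_le hKcpt.bddBelow hx, le_csSup hKcpt.bddAbove hx⟩
  obtain ⟨ε₁, hε₁, hball1⟩ := Metric.isOpen_iff.mp hIo m hmI
  obtain ⟨ε₂, hε₂, hball2⟩ := Metric.isOpen_iff.mp hIo M hMI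
  set δ : ℝ := min ε₁ ε₂ / 2 with hδdef
  have hδ : 0 < δ := by positivity
  have hIccI : Icc (m - δ) (M + δ) ⊆ I := by
    intro x hx
    rcases lt_or_ge x m with h | h
    · apply hball1
      have : |x - m| < ε₁ := by
        rw [abs_lt]
        constructor
        · have := hx.1
          have : min ε₁ ε₂ ≤ ε₁ := min_le_left _ _
          nlinarith [hx.1]
        · linarith
      simpa [Real.dist_eq] using this
    rcases le_or_gt x M with h' | h'
    · exact hIc.out hmI hMI ⟨h, h'⟩
    · apply hball2
      have : |x - M| < ε₂ := by
        rw [abs_lt]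
        constructor
        · linarith
        · have : min ε₁ ε₂ ≤ ε₂ := min_le_right _ _
          nlinarith [hx.2]
      simpa [Real.dist_eq] using this
  -- the cutoff function χ
  set c : ℝ := (m + M) / 2 with hcdef
  have hrIn : (0:ℝ) < (M - m) / 2 + δ / 2 := by nlinarith
  set χb : ContDiffBump c := ⟨(M - m) / 2 + δ / 2, (M - m) / 2 + δ, hrIn, by linarith⟩
  set χ : ℝ → ℝ := fun x => χb x with hχdef
  have hχsmooth : ContDiff ℝ ∞E χ := χb.contDiff
  have hχone : ∀ x ∈ Icc (m - δ/2) (M + δ/2), χ x = 1 := by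
    intro x hx
    apply χb.one_of_mem_closedBall
    rw [Real.closedBall_eq_Icc]
    constructor
    · have : c - ((M - m) / 2 + δ / 2) = m - δ/2 := by rw [hcdef]; ring
      rw [show χb.rIn = (M - m) / 2 + δ / 2 from rfl, this]; exact hx.1
    · have : c + ((M - m) / 2 + δ / 2) = M + δ/2 := by rw [hcdef]; ring
      rw [show χb.rIn = (M - m) / 2 + δ / 2 from rfl, this]; exact hx.2
  have hχtsupp : tsupport χ ⊆ I := by
    rw [hχdef]
    intro x hx
    rw [χb.tsupport_eq, Real.closedBall_eq_Icc] at hx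
    apply hIccI
    have h1 : c - χb.rOut = m - δ := by
      rw [show χb.rOut = (M - m) / 2 + δ from rfl, hcdef]; ring
    have h2 : c + χb.rOut = M + δ := by
      rw [show χb.rOut = (M - m) / 2 + δ from rfl, hcdef]; ring
    rw [h1, h2] at hx
    exact hx
  have hχoneK : ∀ x ∈ K, χ x = 1 := fun x hx =>
    hχone x ⟨by have := (hKmM hx).1; linarith, by have := (hKmM hx).2; linarith⟩
  -- globally smooth extensions of χ/p and χ*q
  have hsmooth : ∀ f : ℝ → ℝ, ContDiffOn ℝ ∞E f I →
      ContDiff ℝ ∞E (fun x => if x ∈ I then χ x * f x else 0) := by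
    intro f hf
    rw [contDiff_iff_contDiffAt]
    intro x
    by_cases hx : x ∈ I
    · have h1 : ContDiffAt ℝ ∞E (fun y => χ y * f y) x :=
        (hχsmooth.contDiffAt).mul (hf.contDiffAt (hIo.mem_nhds hx))
      apply h1.congr_of_eventuallyEq
      filter_upwards [hIo.mem_nhds hx] with y hy
      simp [hy]
    · have hx' : x ∉ tsupport χ := fun h => hx (hχtsupp h)
      have h0 : ∀ᶠ y in 𝓝 x, χ y = 0 := by
        filter_upwards [(isClosed_tsupport χ).isOpen_compl.mem_nhds hx'] with y hy
        exact image_eq_zero_of_notMem_tsupport hy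
      apply (contDiffAt_const (c := (0:ℝ))).congr_of_eventuallyEq
      filter_upwards [h0] with y hy
      by_cases hyI : y ∈ I <;> simp [hyI, hy]
  set g : ℝ → ℝ := fun x => if x ∈ I then χ x * (p x)⁻¹ else 0 with hgdef
  set qt : ℝ → ℝ := fun x => if x ∈ I then χ x * q x else 0 with hqtdef
  have hg : ContDiff ℝ ∞E g := hsmooth _ (hp.inv (fun x hx => (hppos x hx).ne'))
  have hqt : ContDiff ℝ ∞E qt := hsmooth _ hq
  have hgK : ∀ x ∈ K, g x = (p x)⁻¹ := by
    intro x hx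
    rw [hgdef]
    simp only [hφI hx, if_true, hχoneK x hx, one_mul]
  have hqtK : ∀ x ∈ K, qt x = q x := by
    intro x hx
    rw [hqtdef]
    simp only [hφI hx, if_true, hχoneK x hx, one_mul]
  -- complex versions
  have hgC : ContDiff ℝ ∞E (fun x => (g x : ℂ)) := Complex.ofRealCLM.contDiff.comp hg
  have hqtC : ContDiff ℝ ∞E (fun x => (qt x : ℂ)) := Complex.ofRealCLM.contDiff.comp hqt
  -- the iterated operator
  set step : (ℝ → ℂ) → ℝ → ℂ := fun ψ x =>
    -deriv (deriv (fun y => (g y : ℂ) * ψ y)) x + (qt x : ℂ) * ((g x : ℂ) * ψ x) with hstepdef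
  have tsub : ∀ f : ℝ → ℂ, tsupport (deriv f) ⊆ tsupport f := fun f =>
    closure_minimal (support_deriv_subset) (isClosed_tsupport f)
  have hstep : ∀ ψ : ℝ → ℂ, ContDiff ℝ ∞E ψ → tsupport ψ ⊆ K →
      ContDiff ℝ ∞E (step ψ) ∧ tsupport (step ψ) ⊆ K := by
    intro ψ hψc hψs
    have huC : ContDiff ℝ ∞E (fun y => (g y : ℂ) * ψ y) := hgC.mul hψc
    have hu' : ContDiff ℝ ∞E (deriv (fun y => (g y : ℂ) * ψ y)) :=
      (contDiff_infty_iff_deriv.mp huC).2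
    have hu'' : ContDiff ℝ ∞E (deriv (deriv (fun y => (g y : ℂ) * ψ y))) :=
      (contDiff_infty_iff_deriv.mp hu').2
    have husupp : tsupport (fun y => (g y : ℂ) * ψ y) ⊆ K := by
      apply closure_minimal _ hKcl
      intro x hx
      have : ψ x ≠ 0 := fun h => hx (by simp [h])
      exact hψs (subset_tsupport ψ this)
    constructor
    · exact (hu''.neg).add (hqtC.mul (hgC.mul hψc))
    · apply closure_minimal _ hKcl
      intro x hx
      by_contra hxK
      apply hx
      have h1 : deriv (deriv (fun y => (g y : ℂ) * ψ y)) x = 0 := by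
        by_contra h
        exact hxK (((tsub _).trans ((tsub _).trans husupp)) (subset_closure (by simpa using h)))
      have h2 : ψ x = 0 := by
        by_contra h
        exact hxK (hψs (subset_tsupport ψ h))
      simp [hstepdef, h1, h2]
  set ψs : ℕ → ℝ → ℂ := fun n => step^[n] φ with hψsdef
  have hψ : ∀ n, ContDiff ℝ ∞E (ψs n) ∧ tsupport (ψs n) ⊆ K := by
    intro n
    induction n with
    | zero => exact ⟨hφ, subset_rfl⟩
    | succ n ih =>
      have : ψs (n+1) = step (ψs n) := Function.iterate_succ_apply' step n φ
      rw [this]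
      exact hstep _ ih.1 ih.2
  -- the constant
  refine ⟨(∫ x in I, ‖ψs N x‖) + 1,
    add_pos_of_nonneg_of_pos (integral_nonneg fun x => norm_nonneg _) one_pos,
    fun ω hω γ hγ heq => ?_⟩
  -- basic facts about γ
  have hle1 : (1 : WithTop ℕ∞) ≤ ∞E := by exact_mod_cast le_top
  have hleS : ∞E + 1 ≤ ∞E := le_of_eq rfl
  have hγc : ContinuousOn γ I := hγ.continuousOn
  have hγ' : ContDiffOn ℝ ∞E (deriv γ) I := hγ.deriv_of_isOpen hIo hleS
  have hγ'c : ContinuousOn (deriv γ) I := hγ'.continuousOn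
  have hγ''c : ContinuousOn (deriv (deriv γ)) I := (hγ'.deriv_of_isOpen hIo hleS).continuousOn
  have hd1 : ∀ x ∈ I, HasDerivAt γ (deriv γ x) x := fun x hx =>
    ((hγ.contDiffAt (hIo.mem_nhds hx)).differentiableAt (zero_lt_one.trans_le hle1).ne').hasDerivAt
  have hd2 : ∀ x ∈ I, HasDerivAt (deriv γ) (deriv (deriv γ) x) x := fun x hx =>
    ((hγ'.contDiffAt (hIo.mem_nhds hx)).differentiableAt (zero_lt_one.trans_le hle1).ne').hasDerivAt
  -- integrability helper
  have integC : ∀ f : ℝ → ℂ, ContinuousOn f I → Function.support f ⊆ K →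
      IntegrableOn f I volume := by
    intro f hfc hfs
    have h1 : IntegrableOn f K volume := (hfc.mono hφI).integrableOn_compact hKcpt
    have h2 : IntegrableOn f (I \ K) volume := by
      rw [integrableOn_congr_fun (g := fun _ => (0:ℂ))
        (fun x hx => by
          by_contra h
          exact hx.2 (hfs h))
        (hIo.measurableSet.diff hKcl.measurableSet)]
      exact integrableOn_zero
    exact (h1.union h2).mono_set (fun x hx => by
      by_cases h : x ∈ K
      · exact Or.inl h
      · exact Or.inr ⟨hx, h⟩)
  have integR : ∀ f : ℝ → ℝ, ContinuousOn f I → Function.support f ⊆ K →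
      IntegrableOn f I volume := by
    intro f hfc hfs
    have h1 : IntegrableOn f K volume := (hfc.mono hφI).integrableOn_compact hKcpt
    have h2 : IntegrableOn f (I \ K) volume := by
      rw [integrableOn_congr_fun (g := fun _ => (0:ℝ))
        (fun x hx => by
          by_contra h
          exact hx.2 (hfs h))
        (hIo.measurableSet.diff hKcl.measurableSet)]
      exact integrableOn_zero
    exact (h1.union h2).mono_set (fun x hx => by
      by_cases h : x ∈ K
      · exact Or.inl h
      · exact Or.inr ⟨hx, h⟩)
  -- interval for integration by parts
  set A : ℝ := m - δ with hAdef
  set B : ℝ := M + δ with hBdef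
  have hAB : A < B := by rw [hAdef, hBdef]; linarith
  have hIccAB : Icc A B ⊆ I := hIccI
  have hKAB : K ⊆ Ioo A B := fun x hx =>
    ⟨by have := (hKmM hx).1; rw [hAdef]; linarith, by have := (hKmM hx).2; rw [hBdef]; linarith⟩
  have huIcc : uIcc A B ⊆ I := by rw [uIcc_of_le hAB.le]; exact hIccAB
  have conv : ∀ f : ℝ → ℂ, Function.support f ⊆ K →
      (∫ x in I, f x) = ∫ x in A..B, f x := by
    intro f hf
    rw [intervalIntegral.integral_eq_integral_of_support_subset
      (hf.trans (hKAB.trans Ioo_subset_Ioc_self))]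
    exact setIntegral_eq_integral_of_forall_compl_eq_zero
      (fun x hx => by
        by_contra h
        exact hx (hφI (hf h)))
  -- integration by parts
  have ibp : ∀ u : ℝ → ℂ, ContDiff ℝ ∞E u → tsupport u ⊆ K →
      (∫ x in I, u x * deriv (deriv γ) x) = ∫ x in I, deriv (deriv u) x * γ x := by
    intro u hu hus
    have hu' : ContDiff ℝ ∞E (deriv u) := (contDiff_infty_iff_deriv.mp hu).2
    have hu'' : ContDiff ℝ ∞E (deriv (deriv u)) := (contDiff_infty_iff_deriv.mp hu').2
    have hu'supp : tsupport (deriv u) ⊆ K := (tsub u).trans hus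
    have hAK : A ∉ K := fun h => lt_irrefl A (hKAB h).1
    have hBK : B ∉ K := fun h => lt_irrefl B (hKAB h).2
    have huA : u A = 0 := by by_contra h; exact hAK (hus (subset_tsupport u h))
    have huB : u B = 0 := by by_contra h; exact hBK (hus (subset_tsupport u h))
    have hu'A : deriv u A = 0 := by
      by_contra h; exact hAK (hu'supp (subset_tsupport _ h))
    have hu'B : deriv u B = 0 := by
      by_contra h; exact hBK (hu'supp (subset_tsupport _ h))
    have i1 : IntervalIntegrable (fun x => deriv u x * deriv γ x) volume A B :=
      ((hu'.continuous.continuousOn).mul (hγ'c.mono huIcc)).intervalIntegrable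
    have i2 : IntervalIntegrable (fun x => u x * deriv (deriv γ) x) volume A B :=
      ((hu.continuous.continuousOn).mul (hγ''c.mono huIcc)).intervalIntegrable
    have i3 : IntervalIntegrable (fun x => deriv (deriv u) x * γ x) volume A B :=
      ((hu''.continuous.continuousOn).mul (hγc.mono huIcc)).intervalIntegrable
    have h1 : (∫ x in A..B, deriv u x * deriv γ x) + (∫ x in A..B, u x * deriv (deriv γ) x)
        = 0 := by
      rw [← intervalIntegral.integral_add i1 i2]
      rw [intervalIntegral.integral_deriv_mul_eq_sub
        (fun x _ => ((hu.differentiable (zero_lt_one.trans_le hle1).ne') x).hasDerivAt)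
        (fun x hx => hd2 x (huIcc hx))
        (hu'.continuous.intervalIntegrable _ _)
        ((hγ''c.mono huIcc).intervalIntegrable)]
      simp [huA, huB]
    have h2 : (∫ x in A..B, deriv (deriv u) x * γ x) + (∫ x in A..B, deriv u x * deriv γ x)
        = 0 := by
      rw [← intervalIntegral.integral_add i3 i1]
      rw [intervalIntegral.integral_deriv_mul_eq_sub
        (fun x _ => ((hu'.differentiable (zero_lt_one.trans_le hle1).ne') x).hasDerivAt)
        (fun x hx => hd1 x (huIcc hx))
        (hu''.continuous.intervalIntegrable _ _)
        ((hγ'c.mono huIcc).intervalIntegrable)]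
      simp [hu'A, hu'B]
    have s2 : Function.support (fun x => u x * deriv (deriv γ) x) ⊆ K :=
      fun x hx => hus (subset_tsupport u (left_ne_zero_of_mul hx))
    have s3 : Function.support (fun x => deriv (deriv u) x * γ x) ⊆ K :=
      fun x hx => ((tsub _).trans hu'supp) (subset_tsupport _ (left_ne_zero_of_mul hx))
    rw [conv _ s2, conv _ s3]
    linear_combination h1 - h2
  -- key step identity
  have key : ∀ ψ : ℝ → ℂ, ContDiff ℝ ∞E ψ → tsupport ψ ⊆ K →
      (∫ x in I, step ψ x * γ x) = (ω:ℂ)^2 * ∫ x in I, ψ x * γ x := by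
    intro ψ hψc hψs
    have huC : ContDiff ℝ ∞E (fun y => (g y : ℂ) * ψ y) := hgC.mul hψc
    have husupp : tsupport (fun y => (g y : ℂ) * ψ y) ⊆ K :=
      closure_minimal
        (fun x hx => hψs (subset_tsupport ψ (right_ne_zero_of_mul hx))) hKcl
    have hu''C : ContDiff ℝ ∞E (deriv (deriv (fun y => (g y : ℂ) * ψ y))) :=
      (contDiff_infty_iff_deriv.mp (contDiff_infty_iff_deriv.mp huC).2).2
    have hqI : ContinuousOn (fun x => (q x : ℂ)) I :=
      Complex.continuous_ofReal.comp_continuousOn hq.continuousOn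
    have intA : IntegrableOn
        (fun x => deriv (deriv (fun y => (g y : ℂ) * ψ y)) x * γ x) I volume :=
      integC _ ((hu''C.continuous.continuousOn).mul hγc)
        (fun x hx => ((tsub _).trans ((tsub _).trans husupp))
          (subset_tsupport _ (left_ne_zero_of_mul hx)))
    have intB : IntegrableOn
        (fun x => (qt x : ℂ) * ((g x : ℂ) * ψ x) * γ x) I volume :=
      integC _ (((hqtC.mul (hgC.mul hψc)).continuous.continuousOn).mul hγc)
        (fun x hx => husupp (subset_tsupport _
          (right_ne_zero_of_mul (left_ne_zero_of_mul hx))))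
    have intC2 : IntegrableOn
        (fun x => ((g x : ℂ) * ψ x) * deriv (deriv γ) x) I volume :=
      integC _ ((huC.continuous.continuousOn).mul hγ''c)
        (fun x hx => husupp (subset_tsupport _ (left_ne_zero_of_mul hx)))
    have intD : IntegrableOn
        (fun x => (q x : ℂ) * ((g x : ℂ) * ψ x) * γ x) I volume :=
      integC _ ((hqI.mul (hgC.mul hψc).continuous.continuousOn).mul hγc)
        (fun x hx => husupp (subset_tsupport _
          (right_ne_zero_of_mul (left_ne_zero_of_mul hx))))
    calc (∫ x in I, step ψ x * γ x)
        = ∫ x in I, ((qt x : ℂ) * ((g x : ℂ) * ψ x) * γ x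
            - deriv (deriv (fun y => (g y : ℂ) * ψ y)) x * γ x) := by
          apply setIntegral_congr_fun hIo.measurableSet
          intro x _
          simp only [hstepdef]
          ring
      _ = (∫ x in I, (qt x : ℂ) * ((g x : ℂ) * ψ x) * γ x)
            - ∫ x in I, deriv (deriv (fun y => (g y : ℂ) * ψ y)) x * γ x := by
          rw [integral_sub intB intA]
      _ = (∫ x in I, (q x : ℂ) * ((g x : ℂ) * ψ x) * γ x)
            - ∫ x in I, ((g x : ℂ) * ψ x) * deriv (deriv γ) x := by
          rw [← ibp _ huC husupp]
          congr 1
          apply setIntegral_congr_fun hIo.measurableSet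
          intro x _
          by_cases hx0 : ψ x = 0
          · simp [hx0]
          · have hxK : x ∈ K := hψs (subset_tsupport ψ hx0)
            simp only [hqtK x hxK]
      _ = ∫ x in I, ((q x : ℂ) * ((g x : ℂ) * ψ x) * γ x
            - ((g x : ℂ) * ψ x) * deriv (deriv γ) x) := by
          rw [integral_sub intD intC2]
      _ = ∫ x in I, (ω:ℂ)^2 * (ψ x * γ x) := by
          apply setIntegral_congr_fun hIo.measurableSet
          intro x hx
          by_cases hx0 : ψ x = 0
          · simp [hx0]
          · have hxK : x ∈ K := hψs (subset_tsupport ψ hx0)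
            have hgx : g x = (p x)⁻¹ := hgK x hxK
            have hpx : (p x : ℂ) ≠ 0 := by
              exact_mod_cast (hppos x (hφI hxK)).ne'
            have h := heq x hx
            calc (q x : ℂ) * ((g x : ℂ) * ψ x) * γ x
                  - ((g x : ℂ) * ψ x) * deriv (deriv γ) x
                = ((g x : ℂ) * ψ x) * (-deriv (deriv γ) x + (q x : ℂ) * γ x) := by ring
              _ = ((g x : ℂ) * ψ x) * ((ω:ℂ)^2 * (p x : ℂ) * γ x) := by rw [h]
              _ = (ω:ℂ)^2 * (ψ x * γ x) := by
                  rw [hgx]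
                  push_cast
                  field_simp
      _ = (ω:ℂ)^2 * ∫ x in I, ψ x * γ x := by
          rw [integral_const_mul]
  -- iterated identity
  have main : ∀ n, (∫ x in I, ψs n x * γ x) = ((ω:ℂ)^2)^n * ∫ x in I, φ x * γ x := by
    intro n
    induction n with
    | zero => simp [hψsdef]
    | succ n ih =>
      have h1 : ψs (n+1) = step (ψs n) := Function.iterate_succ_apply' step n φ
      rw [h1, key _ (hψ n).1 (hψ n).2, ih]
      ring
  -- final estimate
  obtain ⟨x₀, hx₀⟩ := hKne
  have hbdd : BddAbove (range fun x : tsupport φ => ‖γ x‖) := by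
    have hcont : ContinuousOn (fun x => ‖γ x‖) K := (hγc.mono hφI).norm
    obtain ⟨b, hb⟩ := (hKcpt.image_of_continuousOn hcont).bddAbove
    refine ⟨b, ?_⟩
    rintro r ⟨x, rfl⟩
    exact hb (mem_image_of_mem _ x.2)
  have hSle : ∀ x ∈ K, ‖γ x‖ ≤ ⨆ x : tsupport φ, ‖γ x‖ := fun x hx =>
    le_ciSup hbdd (⟨x, hx⟩ : tsupport φ)
  have hS0 : 0 ≤ ⨆ x : tsupport φ, ‖γ x‖ :=
    le_trans (norm_nonneg (γ x₀)) (hSle x₀ hx₀)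
  have hψNc : Continuous (ψs N) := (hψ N).1.continuous
  have hψNs : Function.support (ψs N) ⊆ K := (subset_tsupport _).trans (hψ N).2
  have hnorm : ‖∫ x in I, ψs N x * γ x‖
      ≤ (∫ x in I, ‖ψs N x‖) * ⨆ x : tsupport φ, ‖γ x‖ := by
    calc ‖∫ x in I, ψs N x * γ x‖ ≤ ∫ x in I, ‖ψs N x * γ x‖ :=
          norm_integral_le_integral_norm _
      _ ≤ ∫ x in I, ‖ψs N x‖ * ⨆ x : tsupport φ, ‖γ x‖ := by
          apply setIntegral_mono_on
          · exact integR (fun x => ‖ψs N x * γ x‖)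
              ((hψNc.continuousOn.mul hγc).norm)
              (fun x hx => hψNs (fun h => by simp [h] at hx))
          · exact (integR (fun x => ‖ψs N x‖) (hψNc.norm.continuousOn)
              (fun x hx => hψNs (fun h => by simp [h] at hx))).mul_const _
          · exact hIo.measurableSet
          · intro x _
            rw [norm_mul]
            by_cases hxK : x ∈ K
            · exact mul_le_mul_of_nonneg_left (hSle x hxK) (norm_nonneg _)
            · have h0 : ψs N x = 0 := by
                by_contra h; exact hxK (hψNs h)
              simp [h0, hS0]
      _ = (∫ x in I, ‖ψs N x‖) * ⨆ x : tsupport φ, ‖γ x‖ := integral_mul_const _ _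
  have habs : ‖((ω:ℂ)^2)^N‖ = |ω|^(2*N) := by
    rw [norm_pow, norm_pow, Complex.norm_real, ← pow_mul, Real.norm_eq_abs]
  have h2 : |ω|^(2*N) * ‖∫ x in I, φ x * γ x‖
      ≤ (∫ x in I, ‖ψs N x‖) * ⨆ x : tsupport φ, ‖γ x‖ := by
    calc |ω|^(2*N) * ‖∫ x in I, φ x * γ x‖
        = ‖((ω:ℂ)^2)^N * ∫ x in I, φ x * γ x‖ := by rw [norm_mul, habs]
      _ = ‖∫ x in I, ψs N x * γ x‖ := by rw [← main N]
      _ ≤ _ := hnorm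
  have hωpos : 0 < |ω|^(2*N) := pow_pos (abs_pos.mpr hω) _
  have h3 : ‖∫ x in I, φ x * γ x‖
      ≤ (∫ x in I, ‖ψs N x‖) * (⨆ x : tsupport φ, ‖γ x‖) / |ω|^(2*N) := by
    rw [le_div_iff₀ hωpos]
    linarith [h2]
  have hi : 0 ≤ (|ω|^(2*N))⁻¹ := inv_nonneg.mpr hωpos.le
  have hint : 0 ≤ ∫ x in I, ‖ψs N x‖ := integral_nonneg fun x => norm_nonneg _
  calc ‖∫ x in I, φ x * γ x‖
      ≤ (∫ x in I, ‖ψs N x‖) * (⨆ x : tsupport φ, ‖γ x‖) / |ω|^(2*N) := h3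
    _ ≤ ((∫ x in I, ‖ψs N x‖) + 1) * (|ω| ^ (2 * N))⁻¹ * ⨆ x : tsupport φ, ‖γ x‖ := by
        rw [div_eq_mul_inv]
        nlinarith [mul_nonneg hi hS0]
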